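/- arXiv:1307.2277 — 2 statements merged into one kernel-verified Lean document; each statement's English description precedes it below -/
import Mathlib

section
/- Let f : ℝ → ℝ be measurable with ∫_{-∞}^{∞} f(y)² φ(y) dy < ∞, where φ is the standard Gaussian density. Define G(x) = ∫_0^x f(y) dy. Then ∫_{-∞}^{∞} G(x)² φ(x) dx ≤ ∫_{-∞}^{∞} f(y)² φ(y) dy, i.e. E[G(B₁)²] ≤ E[f(B₁)²] for a standard Gaussian B₁. -/
open MeasureTheory Filter Set
open scoped ENNReal NNReal

/-- The standard Gaussian density on `ℝ`. -/
noncomputable def stdGaussianDensity (x : ℝ) : ℝ :=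
  (Real.sqrt (2 * Real.pi))⁻¹ * Real.exp (-x ^ 2 / 2)

lemma stdGaussianDensity_pos (x : ℝ) : 0 < stdGaussianDensity x := by
  unfold stdGaussianDensity
  positivity

lemma stdGaussianDensity_continuous : Continuous stdGaussianDensity := by
  unfold stdGaussianDensity; fun_prop

lemma stdGaussianDensity_neg (x : ℝ) : stdGaussianDensity (-x) = stdGaussianDensity x := by
  unfold stdGaussianDensity; rw [show (-x) ^ 2 = x ^ 2 by ring]

lemma integrable_mul_std : MeasureTheory.Integrable
    (fun x : ℝ => x * stdGaussianDensity x) := by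
  have h1 : MeasureTheory.Integrable (fun x : ℝ => x * Real.exp (-(1/2 : ℝ) * x ^ 2)) :=
    integrable_mul_exp_neg_mul_sq (by norm_num)
  have := h1.const_mul ((Real.sqrt (2 * Real.pi))⁻¹)
  refine this.congr (Filter.Eventually.of_forall fun x => ?_)
  dsimp only
  unfold stdGaussianDensity
  rw [show -x ^ 2 / 2 = -(1/2 : ℝ) * x ^ 2 by ring]
  ring

lemma tendsto_std_atTop : Tendsto stdGaussianDensity atTop (nhds 0) := by
  unfold stdGaussianDensity
  rw [show (0:ℝ) = (Real.sqrt (2 * Real.pi))⁻¹ * 0 by ring]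
  apply Tendsto.const_mul
  have h1 : Tendsto (fun x : ℝ => x ^ 2 / 2) atTop atTop :=
    (tendsto_pow_atTop (two_ne_zero)).atTop_div_const (by norm_num)
  have := Real.tendsto_exp_neg_atTop_nhds_zero.comp h1
  refine this.congr fun x => ?_
  simp [neg_div]

lemma real_tail_Ioi (y : ℝ) :
    ∫ x in Set.Ioi y, x * stdGaussianDensity x = stdGaussianDensity y := by
  have hderiv : ∀ x ∈ Set.Ici y, HasDerivAt (fun x => -stdGaussianDensity x)
      (x * stdGaussianDensity x) x := by
    intro x _
    have h1 : HasDerivAt (fun x : ℝ => -x ^ 2 / 2) (-x) x := by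
      have := ((hasDerivAt_pow 2 x).neg).div_const 2
      refine this.congr_deriv ?_
      push_cast; ring
    have h2 := (h1.exp.const_mul ((Real.sqrt (2 * Real.pi))⁻¹)).neg
    refine HasDerivAt.congr_deriv (f := fun x => -stdGaussianDensity x) h2 ?_
    unfold stdGaussianDensity; ring
  have ht : Tendsto (fun x => -stdGaussianDensity x) atTop (nhds 0) := by
    simpa using tendsto_std_atTop.neg
  have := integral_Ioi_of_hasDerivAt_of_tendsto' hderiv
    integrable_mul_std.integrableOn ht
  simpa using this

lemma lintegral_tail_Ioi (y : ℝ) (hy : 0 ≤ y) :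
    ∫⁻ x in Set.Ioi y, ENNReal.ofReal (|x| * stdGaussianDensity x)
      = ENNReal.ofReal (stdGaussianDensity y) := by
  have h1 : ∫⁻ x in Set.Ioi y, ENNReal.ofReal (|x| * stdGaussianDensity x)
      = ∫⁻ x in Set.Ioi y, ENNReal.ofReal (x * stdGaussianDensity x) := by
    apply setLIntegral_congr_fun measurableSet_Ioi
    exact fun x hx => by
      simp only [abs_of_pos (lt_of_le_of_lt hy hx)]
  rw [h1, ← ofReal_integral_eq_lintegral_ofReal integrable_mul_std.integrableOn, real_tail_Ioi]
  rw [EventuallyLE, ae_restrict_iff' measurableSet_Ioi]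
  exact Filter.Eventually.of_forall fun x hx => by
    exact mul_nonneg (le_of_lt (lt_of_le_of_lt hy hx)) (stdGaussianDensity_pos x).le

lemma lintegral_tail_Iio (y : ℝ) (hy : y ≤ 0) :
    ∫⁻ x in Set.Iio y, ENNReal.ofReal (|x| * stdGaussianDensity x)
      = ENNReal.ofReal (stdGaussianDensity y) := by
  have hemb : MeasurableEmbedding (fun x : ℝ => -x) :=
    (Homeomorph.neg ℝ).measurableEmbedding
  have hmp : MeasurePreserving (fun x : ℝ => -x) (volume : Measure ℝ) volume :=
    Measure.measurePreserving_neg _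
  have := hmp.setLIntegral_comp_preimage_emb hemb
    (fun x => ENNReal.ofReal (|x| * stdGaussianDensity x)) (Set.Iio y)
  have hpre : (fun x : ℝ => -x) ⁻¹' Set.Iio y = Set.Ioi (-y) := by
    ext x; simp [Set.mem_Iio, Set.mem_Ioi, neg_lt]
  rw [hpre] at this
  rw [← this]
  simp only [abs_neg, stdGaussianDensity_neg]
  rw [lintegral_tail_Ioi (-y) (by linarith), stdGaussianDensity_neg]

lemma cs_bound (f : ℝ → ℝ) (hf : Measurable f)
    (hloc : IntervalIntegrable f volume 0 x) :
    ENNReal.ofReal ((∫ t in (0:ℝ)..x, f t) ^ 2)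
      ≤ ENNReal.ofReal |x| * ∫⁻ y in Set.uIoc 0 x, ENNReal.ofReal (f y ^ 2) := by
  set ν := (volume : Measure ℝ).restrict (Set.uIoc 0 x) with hν
  have hIA : IntegrableOn (fun y => |f y|) (Set.uIoc 0 x) :=
    intervalIntegrable_iff.mp hloc.abs
  have habs : |∫ t in (0:ℝ)..x, f t| ≤ ∫ y in Set.uIoc 0 x, |f y| := by
    simpa [Real.norm_eq_abs] using
      intervalIntegral.norm_integral_le_integral_norm_uIoc (f := f) (a := 0) (b := x)
        (μ := volume)
  have hJ : ENNReal.ofReal (∫ y in Set.uIoc 0 x, |f y|)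
      = ∫⁻ y, ENNReal.ofReal |f y| ∂ν :=
    ofReal_integral_eq_lintegral_ofReal hIA
      (Filter.Eventually.of_forall fun y => abs_nonneg _)
  set J := ∫⁻ y, ENNReal.ofReal |f y| ∂ν with hJdef
  set I := ∫⁻ y, ENNReal.ofReal (f y ^ 2) ∂ν with hIdef
  have step1 : ENNReal.ofReal ((∫ t in (0:ℝ)..x, f t) ^ 2) ≤ J ^ 2 := by
    have h1 : (∫ t in (0:ℝ)..x, f t) ^ 2 ≤ (∫ y in Set.uIoc 0 x, |f y|) ^ 2 := by
      rw [← sq_abs]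
      exact pow_le_pow_left₀ (abs_nonneg _) habs 2
    calc ENNReal.ofReal ((∫ t in (0:ℝ)..x, f t) ^ 2)
        ≤ ENNReal.ofReal ((∫ y in Set.uIoc 0 x, |f y|) ^ 2) := ENNReal.ofReal_le_ofReal h1
      _ = (ENNReal.ofReal (∫ y in Set.uIoc 0 x, |f y|)) ^ 2 :=
          (ENNReal.ofReal_pow (integral_nonneg fun y => abs_nonneg _) 2)
      _ = J ^ 2 := by rw [hJ]
  have hvol : ν Set.univ = ENNReal.ofReal |x| := by
    rw [hν, Measure.restrict_apply MeasurableSet.univ, Set.univ_inter, Set.uIoc,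
      Real.volume_Ioc]
    congr 1
    rw [max_sub_min_eq_abs]
    simp
  have step2 : J ≤ (ENNReal.ofReal |x|) ^ (1/2 : ℝ) * I ^ (1/2 : ℝ) := by
    have hpq : Real.HolderConjugate 2 2 := Real.HolderConjugate.two_two
    have := ENNReal.lintegral_mul_le_Lp_mul_Lq ν hpq
      (f := fun _ => (1 : ℝ≥0∞)) (g := fun y => ENNReal.ofReal |f y|)
      aemeasurable_const
      (((measurable_abs.comp hf).ennreal_ofReal).aemeasurable)
    simp only [Pi.mul_apply, one_mul] at this
    refine le_trans this (le_of_eq ?_)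
    congr 1
    · rw [show ((1:ℝ≥0∞) ^ (2:ℝ)) = 1 by simp, lintegral_one, hvol]
    · congr 1
      rw [hIdef]
      congr 1
      funext y
      rw [ENNReal.rpow_two, ← ENNReal.ofReal_pow (abs_nonneg _), sq_abs]
  have step3 : J ^ 2 ≤ ENNReal.ofReal |x| * I := by
    calc J ^ 2 ≤ ((ENNReal.ofReal |x|) ^ (1/2 : ℝ) * I ^ (1/2 : ℝ)) ^ 2 :=
        pow_le_pow_left' step2 2
      _ = ENNReal.ofReal |x| * I := by
          rw [mul_pow, ← ENNReal.rpow_two, ← ENNReal.rpow_two,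
            ← ENNReal.rpow_mul, ← ENNReal.rpow_mul]
          norm_num
  exact step1.trans step3

/-- If `f` is measurable with `∫ f² φ dx < ∞` (`φ` the standard Gaussian density) and
`G x = ∫_0^x f`, then `∫ G² φ dx ≤ ∫ f² φ dx`, i.e. `E[G(B₁)²] ≤ E[f(B₁)²]`. -/
theorem integral_sq_primitive_gaussian_le (f : ℝ → ℝ) (hf : Measurable f)
    (hloc : ∀ x : ℝ, IntervalIntegrable f volume 0 x)
    (hfin : (∫⁻ y : ℝ, ENNReal.ofReal ((f y) ^ 2 * stdGaussianDensity y)) < ⊤) :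
    (∫⁻ x : ℝ, ENNReal.ofReal ((∫ t in (0:ℝ)..x, f t) ^ 2 * stdGaussianDensity x))
      ≤ ∫⁻ y : ℝ, ENNReal.ofReal ((f y) ^ 2 * stdGaussianDensity y) := by
  classical
  set w : ℝ → ℝ≥0∞ := fun x => ENNReal.ofReal (|x| * stdGaussianDensity x) with hw
  set c : ℝ → ℝ≥0∞ := fun y => ENNReal.ofReal (f y ^ 2) with hc
  have mW : Measurable w :=
    (measurable_abs.mul stdGaussianDensity_continuous.measurable).ennreal_ofReal
  have mC : Measurable c := (hf.pow_const 2).ennreal_ofReal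
  set S : Set (ℝ × ℝ) := {p : ℝ × ℝ | p.2 ∈ Set.uIoc 0 p.1} with hS
  have hSm : MeasurableSet S := by
    have hSeq : S = {p : ℝ × ℝ | min 0 p.1 < p.2} ∩ {p : ℝ × ℝ | p.2 ≤ max 0 p.1} := by
      ext p
      simp [hS, Set.uIoc, Set.mem_Ioc]
    rw [hSeq]
    exact (measurableSet_lt (measurable_const.min measurable_fst) measurable_snd).inter
      (measurableSet_le measurable_snd (measurable_const.max measurable_fst))
  set K : ℝ × ℝ → ℝ≥0∞ := S.indicator (fun p => w p.1 * c p.2) with hK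
  have mK : Measurable K := ((mW.comp measurable_fst).mul (mC.comp measurable_snd)).indicator hSm
  have hA : ∀ x : ℝ, ENNReal.ofReal ((∫ t in (0:ℝ)..x, f t) ^ 2 * stdGaussianDensity x)
      ≤ ∫⁻ y, K (x, y) := by
    intro x
    have h0 : ∫⁻ y, K (x, y) = w x * ∫⁻ y in Set.uIoc 0 x, c y := by
      have heq : ∀ y, K (x, y) = (Set.uIoc 0 x).indicator (fun y => w x * c y) y := by
        intro y
        simp only [hK, Set.indicator_apply]
        exact if_congr (by simp [hS]) rfl rfl
      rw [lintegral_congr heq, lintegral_indicator measurableSet_uIoc,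
        lintegral_const_mul _ mC]
    rw [h0]
    calc ENNReal.ofReal ((∫ t in (0:ℝ)..x, f t) ^ 2 * stdGaussianDensity x)
        = ENNReal.ofReal ((∫ t in (0:ℝ)..x, f t) ^ 2)
            * ENNReal.ofReal (stdGaussianDensity x) := ENNReal.ofReal_mul (sq_nonneg _)
      _ ≤ (ENNReal.ofReal |x| * ∫⁻ y in Set.uIoc 0 x, c y)
            * ENNReal.ofReal (stdGaussianDensity x) :=
          mul_le_mul_left (cs_bound f hf (hloc x)) _
      _ = w x * ∫⁻ y in Set.uIoc 0 x, c y := by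
          rw [hw]
          dsimp only
          rw [ENNReal.ofReal_mul (abs_nonneg _)]
          ring
  have hswap : ∫⁻ x, ∫⁻ y, K (x, y) = ∫⁻ y, ∫⁻ x, K (x, y) :=
    lintegral_lintegral_swap mK.aemeasurable
  have hB : ∀ y : ℝ, ∫⁻ x, K (x, y) = ENNReal.ofReal (stdGaussianDensity y) * c y := by
    intro y
    rcases le_or_gt y 0 with hy | hy
    · have hmem : ∀ x : ℝ, ((x, y) ∈ S) ↔ x ∈ Set.Iio y := by
        intro x
        simp only [hS, Set.mem_setOf_eq, Set.mem_uIoc, Set.mem_Iio]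
        constructor
        · rintro (⟨h1, h2⟩ | ⟨h1, h2⟩)
          · linarith
          · exact h1
        · intro h; exact Or.inr ⟨h, hy⟩
      have heq : ∀ x, K (x, y) = (Set.Iio y).indicator (fun x => w x * c y) x := by
        intro x
        simp only [hK, Set.indicator_apply]
        exact if_congr (hmem x) rfl rfl
      rw [lintegral_congr heq, lintegral_indicator measurableSet_Iio,
        lintegral_mul_const _ mW, lintegral_tail_Iio y hy]
    · have hmem : ∀ x : ℝ, ((x, y) ∈ S) ↔ x ∈ Set.Ici y := by
        intro x
        simp only [hS, Set.mem_setOf_eq, Set.mem_uIoc, Set.mem_Ici]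
        constructor
        · rintro (⟨h1, h2⟩ | ⟨h1, h2⟩)
          · exact h2
          · linarith
        · intro h; exact Or.inl ⟨hy, h⟩
      have heq : ∀ x, K (x, y) = (Set.Ici y).indicator (fun x => w x * c y) x := by
        intro x
        simp only [hK, Set.indicator_apply]
        exact if_congr (hmem x) rfl rfl
      rw [lintegral_congr heq, lintegral_indicator measurableSet_Ici,
        lintegral_mul_const _ mW,
        setLIntegral_congr (Ioi_ae_eq_Ici' (measure_singleton y)).symm,
        lintegral_tail_Ioi y hy.le]
  calc (∫⁻ x : ℝ, ENNReal.ofReal ((∫ t in (0:ℝ)..x, f t) ^ 2 * stdGaussianDensity x))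
      ≤ ∫⁻ x, ∫⁻ y, K (x, y) := lintegral_mono hA
    _ = ∫⁻ y, ∫⁻ x, K (x, y) := hswap
    _ = ∫⁻ y, ENNReal.ofReal (stdGaussianDensity y) * c y := lintegral_congr hB
    _ = ∫⁻ y : ℝ, ENNReal.ofReal ((f y) ^ 2 * stdGaussianDensity y) := by
        refine lintegral_congr fun y => ?_
        rw [hc]
        dsimp only
        rw [ENNReal.ofReal_mul (sq_nonneg _), mul_comm]
end

section
/- Suppose W : ℝ → ℝ satisfies |W(x)| ≤ A (|x| log log(|x| + 1/|x| + 36))^{1/2} for all x ≠ 0 and some constant A > 0. Then for every λ ≥ e^{36}, the rescaled function W_λ(t) = W(λt)/(2λ log log λ)^{1/2} satisfies |W_λ(t)| ≤ 2A (|t| log log(|t| + 1/|t| + 36))^{1/2} for all t ≠ 0. -/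
set_option maxHeartbeats 1000000


/-- If `|W(x)| ≤ A (|x| log log(|x| + 1/|x| + 36))^{1/2}` for all `x ≠ 0`, then for every
`λ ≥ e^{36}`, the rescaled function `W_λ(t) = W(λt)/(2λ log log λ)^{1/2}` satisfies
`|W_λ(t)| ≤ 2A (|t| log log(|t| + 1/|t| + 36))^{1/2}` for all `t ≠ 0`. -/
theorem rescaled_LIL_bound (W : ℝ → ℝ) (A : ℝ) (hA : 0 < A)
    (hW : ∀ x : ℝ, x ≠ 0 →
      |W x| ≤ A * Real.sqrt (|x| * Real.log (Real.log (|x| + 1 / |x| + 36)))) :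
    ∀ lam : ℝ, Real.exp 36 ≤ lam → ∀ t : ℝ, t ≠ 0 →
      |W (lam * t) / Real.sqrt (2 * lam * Real.log (Real.log lam))|
        ≤ 2 * A * Real.sqrt (|t| * Real.log (Real.log (|t| + 1 / |t| + 36))) := by
  intro lam hlam t ht
  have hs : 0 < |t| := abs_pos.mpr ht
  set s : ℝ := |t| with hsdef
  have hlampos : (0:ℝ) < lam := lt_of_lt_of_le (Real.exp_pos 36) hlam
  have hlam1 : (1:ℝ) ≤ lam := le_trans (Real.one_le_exp (by norm_num)) hlam
  have hloglam : (36:ℝ) ≤ Real.log lam := (Real.le_log_iff_exp_le hlampos).mpr hlam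
  have hexp1 : Real.exp 1 < 2.7182818286 := Real.exp_one_lt_d9
  have hexp3 : Real.exp 3 < 36 := by
    have h3 : Real.exp 3 = (Real.exp 1) ^ (3:ℕ) := by
      rw [← Real.exp_nat_mul]; norm_num
    have h4 : (Real.exp 1) ^ (3:ℕ) < 2.7182818286 ^ (3:ℕ) :=
      pow_lt_pow_left₀ hexp1 (Real.exp_pos 1).le (by norm_num)
    rw [h3]; nlinarith
  have hllg : (3:ℝ) ≤ Real.log (Real.log lam) :=
    (Real.le_log_iff_exp_le (by linarith)).mpr (by linarith)
  -- the time-side quantity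
  have hs1 : (2:ℝ) ≤ s + 1/s := by
    have h1 : 1/s * s = 1 := one_div_mul_cancel (ne_of_gt hs)
    nlinarith [sq_nonneg (s - 1), hs]
  set B : ℝ := s + 1/s + 36 with hBdef
  have hB : (38:ℝ) ≤ B := by simp only [hBdef]; linarith
  have hBpos : (0:ℝ) < B := by linarith
  have hlogB : (3:ℝ) ≤ Real.log B :=
    (Real.le_log_iff_exp_le hBpos).mpr (by linarith)
  have hL2 : (1:ℝ) ≤ Real.log (Real.log B) :=
    (Real.le_log_iff_exp_le (by linarith)).mpr (by linarith [Real.exp_one_lt_d9])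
  -- the rescaled quantity
  have hlspos : 0 < lam * s := mul_pos hlampos hs
  set C : ℝ := lam * s + 1/(lam*s) + 36 with hCdef
  have hCpos : (0:ℝ) < C := by positivity
  have hCle : C ≤ lam * B := by
    have h1 : 1/(lam*s) ≤ lam * (1/s) := by
      rw [div_le_iff₀ hlspos, one_div]
      have h2 : lam * s⁻¹ * (lam * s) = (lam * lam) * (s⁻¹ * s) := by ring
      rw [h2, inv_mul_cancel₀ (ne_of_gt hs), mul_one]
      nlinarith [hlam1]
    simp only [hCdef, hBdef]
    nlinarith
  have hCge : (2:ℝ) ≤ lam * s + 1/(lam*s) := by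
    have h1 : 1/(lam*s) * (lam*s) = 1 := one_div_mul_cancel (ne_of_gt hlspos)
    nlinarith [sq_nonneg (lam * s - 1), hlspos]
  have hlogC3 : (3:ℝ) ≤ Real.log C :=
    (Real.le_log_iff_exp_le hCpos).mpr (by simp only [hCdef]; linarith)
  have hlogC : Real.log C ≤ Real.log lam + Real.log B := by
    calc Real.log C ≤ Real.log (lam * B) := Real.log_le_log hCpos hCle
      _ = Real.log lam + Real.log B := Real.log_mul (ne_of_gt hlampos) (ne_of_gt hBpos)
  have hL1 : Real.log (Real.log C) ≤ Real.log (Real.log lam) + Real.log (Real.log B) := by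
    calc Real.log (Real.log C) ≤ Real.log (Real.log lam * Real.log B) := by
          apply Real.log_le_log (by linarith)
          nlinarith
      _ = Real.log (Real.log lam) + Real.log (Real.log B) :=
          Real.log_mul (by linarith) (by linarith)
  have hLCpos : (0:ℝ) < Real.log (Real.log C) := by
    have h1 : (1:ℝ) ≤ Real.log (Real.log C) :=
      (Real.le_log_iff_exp_le (show (0:ℝ) < Real.log C by linarith)).mpr
        (by linarith [Real.exp_one_lt_d9])
    linarith
  -- combine: log log C ≤ 8 * loglog lam * loglog B
  have hkey : Real.log (Real.log C) ≤
      8 * Real.log (Real.log lam) * Real.log (Real.log B) := by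
    nlinarith [hllg, hL2, hL1]
  -- denominator
  set D : ℝ := Real.sqrt (2 * lam * Real.log (Real.log lam)) with hDdef
  have hDpos : 0 < D := Real.sqrt_pos.mpr (by nlinarith)
  set L2 : ℝ := Real.log (Real.log B) with hL2def
  have habslt : |lam * t| = lam * s := by
    rw [abs_mul, abs_of_pos hlampos]
  have hWb : |W (lam * t)| ≤ A * Real.sqrt (lam * s * Real.log (Real.log C)) := by
    have := hW (lam * t) (mul_ne_zero (ne_of_gt hlampos) ht)
    rwa [habslt, ← hCdef] at this
  have hsqrt : Real.sqrt (lam * s * Real.log (Real.log C)) ≤ 2 * Real.sqrt (s * L2) * D := by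
    have hrhs : (2 * Real.sqrt (s * L2) * D) ^ 2 = 4 * (s * L2) * (2 * lam * Real.log (Real.log lam)) := by
      rw [mul_pow, mul_pow, Real.sq_sqrt (by positivity), Real.sq_sqrt (by nlinarith)]
      ring
    have hle : lam * s * Real.log (Real.log C) ≤ (2 * Real.sqrt (s * L2) * D) ^ 2 := by
      rw [hrhs]; nlinarith [hkey, hs.le, hllg, hL2, hlampos.le, hLCpos.le]
    calc Real.sqrt (lam * s * Real.log (Real.log C))
        ≤ Real.sqrt ((2 * Real.sqrt (s * L2) * D) ^ 2) := Real.sqrt_le_sqrt hle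
      _ = 2 * Real.sqrt (s * L2) * D := Real.sqrt_sq (by positivity)
  rw [abs_div, abs_of_nonneg (Real.sqrt_nonneg _), div_le_iff₀ hDpos]
  calc |W (lam * t)| ≤ A * Real.sqrt (lam * s * Real.log (Real.log C)) := hWb
    _ ≤ A * (2 * Real.sqrt (s * L2) * D) := by
        exact mul_le_mul_of_nonneg_left hsqrt hA.le
    _ = 2 * A * Real.sqrt (s * L2) * D := by ring
end
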